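/- (Fay three-section formula) For all u₁, u₂, z₁, z₂ ∈ ℂ such that θ is nonzero at each of u₁, u₂, u₁+u₂, z₁, z₂ and z₁−z₂, one has φ(u₁,z₁)·φ(u₂,z₂) = φ(u₁+u₂, z₁)·φ(u₂, z₂−z₁) + φ(u₁+u₂, z₂)·φ(u₁, z₁−z₂). -/

import Mathlib

open Complex

noncomputable section

/-- The odd Jacobi theta function
`θ(z) = q^{1/8} · Σ_{n ∈ ℤ} (−1)^n exp(2πi( n(n+1)τ/2 + n z ))`, `q = exp(2πiτ)`. -/
def theta (τ z : ℂ) : ℂ :=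
  Complex.exp (2 * (Real.pi : ℂ) * I * τ / 8) *
    ∑' n : ℤ, (-1 : ℂ) ^ n *
      Complex.exp (2 * (Real.pi : ℂ) * I * ((n : ℂ) * ((n : ℂ) + 1) * τ / 2 + (n : ℂ) * z))

/-- The derivative `θ'` of `θ` in `z`. -/
def theta' (τ : ℂ) : ℂ → ℂ := deriv (theta τ)

/-- `E₁(z) = θ'(z)/θ(z)`. -/
def E₁ (τ z : ℂ) : ℂ := theta' τ z / theta τ z

/-- `E₂(z) = −E₁'(z)`. -/
def E₂ (τ z : ℂ) : ℂ := - deriv (fun w => E₁ τ w) z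

/-- The Kronecker function `φ(u,z) = θ(u+z)·θ'(0)/(θ(u)·θ(z))`. -/
def phi (τ u z : ℂ) : ℂ := theta τ (u + z) * theta' τ 0 / (theta τ u * theta τ z)

/-- `e2 w = exp(2πi w)`. -/
def e2 (w : ℂ) : ℂ := Complex.exp (2 * (Real.pi : ℂ) * I * w)

lemma e2_mul (s t : ℂ) : e2 s * e2 t = e2 (s + t) := by
  rw [e2, e2, e2, ← Complex.exp_add]; congr 1; ring

lemma e2_ne_zero (w : ℂ) : e2 w ≠ 0 := Complex.exp_ne_zero _

lemma e2_int (n : ℤ) : e2 (n : ℂ) = 1 := by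
  rw [e2, show 2 * (Real.pi : ℂ) * I * n = n * (2 * Real.pi * I) by ring,
    Complex.exp_int_mul_two_pi_mul_I]

lemma e2_half : e2 (1 / 2 : ℂ) = -1 := by
  rw [e2, show 2 * (Real.pi : ℂ) * I * (1 / 2) = Real.pi * I by ring, Complex.exp_pi_mul_I]

/-- master summability -/
lemma summable_norm_e2 {α : ℂ} (hα : 0 < α.im) (β γ : ℂ) :
    Summable fun n : ℤ => ‖e2 ((n : ℂ) ^ 2 * α + (n : ℂ) * β + γ)‖ := by
  have h : Summable fun n : ℤ => jacobiTheta₂_term n β (2 * α) := by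
    rw [summable_jacobiTheta₂_term_iff]
    simpa using by positivity
  have h2 : Summable fun n : ℤ => ‖jacobiTheta₂_term n β (2 * α)‖ :=
    summable_norm_iff.mpr h
  have h3 := h2.mul_right ‖e2 γ‖
  refine h3.congr fun n => ?_
  rw [← norm_mul]
  congr 1
  rw [jacobiTheta₂_term, e2, e2, ← Complex.exp_add]
  congr 1
  ring

/-- Term of `S`. -/
def SSt (τ z : ℂ) (n : ℤ) : ℂ := e2 ((n : ℂ) * ((n : ℂ) + 1) * τ / 2 + (n : ℂ) * z + (n : ℂ) / 2)

def SS (τ z : ℂ) : ℂ := ∑' n : ℤ, SSt τ z n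

def Aft (τ w : ℂ) (j : ℤ) : ℂ := e2 ((j : ℂ) * ((j : ℂ) + 1) * τ + 2 * (j : ℂ) * w)
def Cft (τ w : ℂ) (j : ℤ) : ℂ := e2 ((j : ℂ) ^ 2 * τ + (2 * (j : ℂ) - 1) * w)

def Af (τ w : ℂ) : ℂ := ∑' j : ℤ, Aft τ w j
def Cf (τ w : ℂ) : ℂ := ∑' j : ℤ, Cft τ w j

variable {τ : ℂ}

lemma summable_SSt (hτ : 0 < τ.im) (z : ℂ) : Summable fun n : ℤ => ‖SSt τ z n‖ := by
  refine (summable_norm_e2 (α := τ / 2) (by simpa using by positivity)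
    (τ / 2 + z + 1 / 2) 0).congr fun n => ?_
  congr 2
  push_cast
  ring

lemma summable_Aft (hτ : 0 < τ.im) (w : ℂ) : Summable fun j : ℤ => ‖Aft τ w j‖ := by
  refine (summable_norm_e2 (α := τ) hτ (τ + 2 * w) 0).congr fun n => ?_
  congr 2
  push_cast
  ring

lemma summable_Cft (hτ : 0 < τ.im) (w : ℂ) : Summable fun j : ℤ => ‖Cft τ w j‖ := by
  refine (summable_norm_e2 (α := τ) hτ (2 * w) (-w)).congr fun n => ?_
  congr 2
  push_cast
  ring

/-- Reindexing bijection for the parity splitting of `ℤ × ℤ`. -/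
def pse : (ℤ × ℤ) × Bool ≃ ℤ × ℤ where
  toFun q := if q.2 then (q.1.1 + q.1.2 + 1, q.1.1 - q.1.2) else (q.1.1 + q.1.2, q.1.1 - q.1.2)
  invFun p := if 2 ∣ (p.1 + p.2) then (((p.1 + p.2) / 2, (p.1 - p.2) / 2), false)
    else (((p.1 + p.2 - 1) / 2, (p.1 - p.2 - 1) / 2), true)
  left_inv := by
    rintro ⟨⟨j, k⟩, b⟩
    cases b <;> simp only [if_true, if_false, Bool.false_eq_true] <;> split_ifs with h <;>
      simp_all <;> first | omega | (constructor <;> omega)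
  right_inv := by
    rintro ⟨m, n⟩
    by_cases h : 2 ∣ m + n <;>
      simp only [h, if_true, if_false, Bool.false_eq_true, reduceIte] <;>
      simp <;> first | omega | (constructor <;> omega)

set_option maxHeartbeats 1000000 in
lemma key0 (hτ : 0 < τ.im) (s t : ℂ) :
    SS τ (s + t) * SS τ (s - t) = e2 t * (Af τ s * Cf τ t - Cf τ s * Af τ t) := by
  have hF := summable_SSt hτ (s + t)
  have hG := summable_SSt hτ (s - t)
  set H : ℤ × ℤ → ℂ := fun p => SSt τ (s + t) p.1 * SSt τ (s - t) p.2 with hHdef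
  have hH : Summable H :=
    summable_mul_of_summable_norm (f := SSt τ (s + t)) (g := SSt τ (s - t)) hF hG
  have hHq : Summable fun q => H (pse q) := pse.summable_iff.mpr hH
  have hc2 : Summable fun k : ℤ => ‖e2 t * Cft τ t k‖ := by
    simpa [norm_mul] using (summable_Cft hτ t).mul_left ‖e2 t‖
  have hb : Summable fun j : ℤ => ‖Cft τ s (j + 1)‖ :=
    (Equiv.addRight (1 : ℤ)).summable_iff.mpr (summable_Cft hτ s)
  have hterm_false : ∀ j k : ℤ, H (pse ((j, k), false)) = Aft τ s j * (e2 t * Cft τ t k) := by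
    intro j k
    show SSt τ (s + t) (j + k) * SSt τ (s - t) (j - k) = _
    rw [SSt, SSt, Aft, Cft, e2_mul, e2_mul, e2_mul]
    rw [show ((j + k : ℤ) : ℂ) * (((j + k : ℤ) : ℂ) + 1) * τ / 2 + ((j + k : ℤ) : ℂ) * (s + t) +
          ((j + k : ℤ) : ℂ) / 2 +
          (((j - k : ℤ) : ℂ) * (((j - k : ℤ) : ℂ) + 1) * τ / 2 + ((j - k : ℤ) : ℂ) * (s - t) +
          ((j - k : ℤ) : ℂ) / 2) =
        (j : ℂ) * ((j : ℂ) + 1) * τ + 2 * (j : ℂ) * s +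
          (t + ((k : ℂ) ^ 2 * τ + (2 * (k : ℂ) - 1) * t)) + (j : ℂ) by push_cast; ring,
      ← e2_mul, e2_int, mul_one]
  have hterm_true : ∀ j k : ℤ,
      H (pse ((j, k), true)) = -(e2 t * (Cft τ s (j + 1) * Aft τ t k)) := by
    intro j k
    show SSt τ (s + t) (j + k + 1) * SSt τ (s - t) (j - k) = _
    rw [SSt, SSt, Aft, Cft, e2_mul, e2_mul, e2_mul]
    rw [show ((j + k + 1 : ℤ) : ℂ) * (((j + k + 1 : ℤ) : ℂ) + 1) * τ / 2 +
          ((j + k + 1 : ℤ) : ℂ) * (s + t) + ((j + k + 1 : ℤ) : ℂ) / 2 +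
          (((j - k : ℤ) : ℂ) * (((j - k : ℤ) : ℂ) + 1) * τ / 2 + ((j - k : ℤ) : ℂ) * (s - t) +
          ((j - k : ℤ) : ℂ) / 2) =
        t + (((j + 1 : ℤ) : ℂ) ^ 2 * τ + (2 * ((j + 1 : ℤ) : ℂ) - 1) * s +
          ((k : ℂ) * ((k : ℂ) + 1) * τ + 2 * (k : ℂ) * t)) + (j : ℂ) + 1 / 2 by
        push_cast; ring,
      ← e2_mul, ← e2_mul, e2_int, e2_half, mul_one]
    ring
  calc SS τ (s + t) * SS τ (s - t) = ∑' p : ℤ × ℤ, H p :=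
        tsum_mul_tsum_of_summable_norm (f := SSt τ (s + t)) (g := SSt τ (s - t)) hF hG
    _ = ∑' q : (ℤ × ℤ) × Bool, H (pse q) := (pse.tsum_eq H).symm
    _ = ∑' jk : ℤ × ℤ, ∑' b : Bool, H (pse (jk, b)) := Summable.tsum_prod' hHq hHq.prod_factor
    _ = ∑' jk : ℤ × ℤ, (Aft τ s jk.1 * (e2 t * Cft τ t jk.2) +
          -(e2 t * (Cft τ s (jk.1 + 1) * Aft τ t jk.2))) := by
        refine tsum_congr fun jk => ?_
        rw [tsum_bool, hterm_false jk.1 jk.2, hterm_true jk.1 jk.2]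
    _ = (∑' jk : ℤ × ℤ, Aft τ s jk.1 * (e2 t * Cft τ t jk.2)) +
          ∑' jk : ℤ × ℤ, -(e2 t * (Cft τ s (jk.1 + 1) * Aft τ t jk.2)) := by
        refine Summable.tsum_add (summable_mul_of_summable_norm (f := Aft τ s)
          (g := fun k => e2 t * Cft τ t k) (summable_Aft hτ s) hc2) ?_
        have : Summable fun jk : ℤ × ℤ => Cft τ s (jk.1 + 1) * Aft τ t jk.2 :=
          summable_mul_of_summable_norm (f := fun j => Cft τ s (j + 1)) (g := Aft τ t)
            hb (summable_Aft hτ t)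
        exact ((this.mul_left (e2 t)).neg)
    _ = Af τ s * (e2 t * Cf τ t) + -(e2 t * ((∑' j : ℤ, Cft τ s (j + 1)) * Af τ t)) := by
        rw [← tsum_mul_tsum_of_summable_norm (f := Aft τ s)
          (g := fun k => e2 t * Cft τ t k) (summable_Aft hτ s) hc2, tsum_neg]
        simp only [tsum_mul_left]
        rw [← tsum_mul_tsum_of_summable_norm (f := fun j => Cft τ s (j + 1)) (g := Aft τ t)
          hb (summable_Aft hτ t)]
        simp only [Af, Cf]
    _ = e2 t * (Af τ s * Cf τ t - Cf τ s * Af τ t) := by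
        rw [show (∑' j : ℤ, Cft τ s (j + 1)) = Cf τ s from (Equiv.addRight (1 : ℤ)).tsum_eq _]
        ring

lemma theta_SS (z : ℂ) : theta τ z = e2 (τ / 8) * SS τ z := by
  rw [theta, SS]
  congr 1
  · rw [e2]; congr 1; ring
  · refine tsum_congr fun n => ?_
    rw [SSt, e2, show ((-1 : ℂ)) ^ n = Complex.exp ((n : ℂ) * ((Real.pi : ℂ) * I)) by
      rw [← Complex.exp_pi_mul_I, ← Complex.exp_int_mul], ← Complex.exp_add]
    congr 1
    ring

lemma theta_neg (hτ : 0 < τ.im) (w : ℂ) : theta τ (-w) = -e2 w * theta τ w := by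
  rw [theta_SS, theta_SS]
  suffices h : SS τ (-w) = -e2 w * SS τ w by rw [h]; ring
  have h1 : SS τ (-w) = ∑' n : ℤ, SSt τ (-w) (-1 - n) :=
    ((Equiv.subLeft (-1 : ℤ)).tsum_eq (SSt τ (-w))).symm
  rw [h1, show -e2 w * SS τ w = ∑' n : ℤ, -e2 w * SSt τ w n by rw [tsum_mul_left, SS]]
  refine tsum_congr fun n => ?_
  rw [SSt, SSt]
  rw [show ((-1 - n : ℤ) : ℂ) * (((-1 - n : ℤ) : ℂ) + 1) * τ / 2 + ((-1 - n : ℤ) : ℂ) * (-w) +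
        ((-1 - n : ℤ) : ℂ) / 2 =
      (n : ℂ) * ((n : ℂ) + 1) * τ / 2 + (n : ℂ) * w + (n : ℂ) / 2 + w + 1 / 2 +
        ((-n - 1 : ℤ) : ℂ) by push_cast; ring,
    ← e2_mul, ← e2_mul, ← e2_mul, e2_int, e2_half, mul_one]
  ring

lemma key_theta (hτ : 0 < τ.im) (s t : ℂ) :
    theta τ (s + t) * theta τ (s - t) =
      e2 (τ / 4) * (e2 t * (Af τ s * Cf τ t - Cf τ s * Af τ t)) := by
  calc theta τ (s + t) * theta τ (s - t)
      = (e2 (τ / 8) * e2 (τ / 8)) * (SS τ (s + t) * SS τ (s - t)) := by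
        rw [theta_SS, theta_SS]; ring
    _ = _ := by rw [e2_mul, key0 hτ s t, show τ / 8 + τ / 8 = τ / 4 by ring]

lemma star (hτ : 0 < τ.im) (u₁ u₂ z₁ z₂ : ℂ) :
    theta τ (u₁ + z₁) * theta τ (u₂ + z₂) * (theta τ (u₁ + u₂) * theta τ (z₁ - z₂)) +
      e2 (z₂ - z₁) * (theta τ (u₁ + u₂ + z₁) * theta τ z₂ *
        (theta τ u₁ * theta τ (u₂ + z₂ - z₁))) -
      theta τ (u₁ + u₂ + z₂) * theta τ z₁ *
        (theta τ (u₁ + z₁ - z₂) * theta τ u₂) = 0 := by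
  have h1 := key_theta hτ ((u₁ + u₂ + z₁ + z₂) / 2) ((u₁ - u₂ + z₁ - z₂) / 2)
  have h2 := key_theta hτ ((u₁ + u₂ + z₁ - z₂) / 2) ((u₁ + u₂ - z₁ + z₂) / 2)
  have h3 := key_theta hτ ((u₁ + u₂ + z₁ + z₂) / 2) ((u₁ + u₂ + z₁ - z₂) / 2)
  have h4 := key_theta hτ ((u₁ + u₂ - z₁ + z₂) / 2) ((u₁ - u₂ + z₁ - z₂) / 2)
  have h5 := key_theta hτ ((u₁ + u₂ + z₁ + z₂) / 2) ((u₁ + u₂ - z₁ + z₂) / 2)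
  have h6 := key_theta hτ ((u₁ + u₂ + z₁ - z₂) / 2) ((u₁ - u₂ + z₁ - z₂) / 2)
  rw [show (u₁ + u₂ + z₁ + z₂) / 2 + (u₁ - u₂ + z₁ - z₂) / 2 = u₁ + z₁ by ring,
    show (u₁ + u₂ + z₁ + z₂) / 2 - (u₁ - u₂ + z₁ - z₂) / 2 = u₂ + z₂ by ring] at h1
  rw [show (u₁ + u₂ + z₁ - z₂) / 2 + (u₁ + u₂ - z₁ + z₂) / 2 = u₁ + u₂ by ring,
    show (u₁ + u₂ + z₁ - z₂) / 2 - (u₁ + u₂ - z₁ + z₂) / 2 = z₁ - z₂ by ring] at h2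
  rw [show (u₁ + u₂ + z₁ + z₂) / 2 + (u₁ + u₂ + z₁ - z₂) / 2 = u₁ + u₂ + z₁ by ring,
    show (u₁ + u₂ + z₁ + z₂) / 2 - (u₁ + u₂ + z₁ - z₂) / 2 = z₂ by ring] at h3
  rw [show (u₁ + u₂ - z₁ + z₂) / 2 + (u₁ - u₂ + z₁ - z₂) / 2 = u₁ by ring,
    show (u₁ + u₂ - z₁ + z₂) / 2 - (u₁ - u₂ + z₁ - z₂) / 2 = u₂ + z₂ - z₁ by ring] at h4
  rw [show (u₁ + u₂ + z₁ + z₂) / 2 + (u₁ + u₂ - z₁ + z₂) / 2 = u₁ + u₂ + z₂ by ring,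
    show (u₁ + u₂ + z₁ + z₂) / 2 - (u₁ + u₂ - z₁ + z₂) / 2 = z₁ by ring] at h5
  rw [show (u₁ + u₂ + z₁ - z₂) / 2 + (u₁ - u₂ + z₁ - z₂) / 2 = u₁ + z₁ - z₂ by ring,
    show (u₁ + u₂ + z₁ - z₂) / 2 - (u₁ - u₂ + z₁ - z₂) / 2 = u₂ by ring] at h6
  rw [h1, h2, h3, h4, h5, h6]
  have hba : e2 (z₂ - z₁) * e2 ((u₁ + u₂ + z₁ - z₂) / 2) = e2 ((u₁ + u₂ - z₁ + z₂) / 2) := by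
    rw [e2_mul]; congr 1; ring
  linear_combination (e2 (τ / 4) * e2 (τ / 4) * e2 ((u₁ - u₂ + z₁ - z₂) / 2) *
    (Af τ ((u₁ + u₂ + z₁ + z₂) / 2) * Cf τ ((u₁ + u₂ + z₁ - z₂) / 2) -
      Cf τ ((u₁ + u₂ + z₁ + z₂) / 2) * Af τ ((u₁ + u₂ + z₁ - z₂) / 2)) *
    (Af τ ((u₁ + u₂ - z₁ + z₂) / 2) * Cf τ ((u₁ - u₂ + z₁ - z₂) / 2) -
      Cf τ ((u₁ + u₂ - z₁ + z₂) / 2) * Af τ ((u₁ - u₂ + z₁ - z₂) / 2))) * hba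

/-- Fay three-section formula:
`φ(u₁,z₁)·φ(u₂,z₂) = φ(u₁+u₂, z₁)·φ(u₂, z₂−z₁) + φ(u₁+u₂, z₂)·φ(u₁, z₁−z₂)`. -/
theorem fay_trisecant (τ : ℂ) (hτ : 0 < τ.im) (u₁ u₂ z₁ z₂ : ℂ)
    (hu₁ : theta τ u₁ ≠ 0) (hu₂ : theta τ u₂ ≠ 0) (hu₁₂ : theta τ (u₁ + u₂) ≠ 0)
    (hz₁ : theta τ z₁ ≠ 0) (hz₂ : theta τ z₂ ≠ 0) (hz₁₂ : theta τ (z₁ - z₂) ≠ 0) :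
    phi τ u₁ z₁ * phi τ u₂ z₂ =
      phi τ (u₁ + u₂) z₁ * phi τ u₂ (z₂ - z₁) + phi τ (u₁ + u₂) z₂ * phi τ u₁ (z₁ - z₂) := by
  have hstar := star hτ u₁ u₂ z₁ z₂
  have hzz' : theta τ (z₂ - z₁) = -e2 (z₁ - z₂) * theta τ (z₁ - z₂) := by
    rw [show z₂ - z₁ = -(z₁ - z₂) by ring, theta_neg hτ]
  simp only [phi]
  rw [hzz', show u₂ + (z₂ - z₁) = u₂ + z₂ - z₁ by ring,
    show u₁ + (z₁ - z₂) = u₁ + z₁ - z₂ by ring]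
  have he := e2_ne_zero (z₁ - z₂)
  field_simp
  have hE : e2 (z₂ - z₁) * e2 (z₁ - z₂) = 1 := by
    rw [e2_mul, show z₂ - z₁ + (z₁ - z₂) = 0 by ring, e2, mul_zero, Complex.exp_zero]
  set K := theta' τ 0 * theta' τ 0 * theta τ (u₁ + u₂) * theta τ (z₁ - z₂) *
    theta τ u₁ * theta τ z₁ * theta τ u₂ * theta τ z₂ with hK
  set S2 := theta τ (u₁ + u₂ + z₁) * theta τ z₂ * theta τ u₁ * theta τ (u₂ + z₂ - z₁) with hS2
  linear_combination (theta' τ 0 ^ 2 * e2 (z₁ - z₂)) * hstar - (theta' τ 0 ^ 2 * S2) * hE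

end
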